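/- M,X ⊨_D ∀x φ if and only if M,X[M/x] ⊨_D φ, for every dependence logic formula φ with FV(∀x φ) ⊆ dom(X). -/

import Mathlib

set_option linter.unusedSectionVars false

namespace Paper

/-- A first-order vocabulary (signature): function and relation symbols with arities. -/
structure Sig where
  Func : Type
  arF : Func → ℕ
  Rel : Type
  arR : Rel → ℕ

/-- A τ-structure with universe `α`. -/
structure Struc (σ : Sig) (α : Type) where
  interpF : (f : σ.Func) → (Fin (σ.arF f) → α) → α
  interpR : (r : σ.Rel) → (Fin (σ.arR r) → α) → Prop

/-- First-order terms; variables are natural numbers. -/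
inductive Term (σ : Sig) where
  | var : ℕ → Term σ
  | func : (f : σ.Func) → (Fin (σ.arF f) → Term σ) → Term σ

/-- Interpretation of a term under an assignment. -/
def Term.eval {σ : Sig} {α : Type} (𝕄 : Struc σ α) (s : ℕ → α) : Term σ → α
  | .var x => s x
  | .func f ts => 𝕄.interpF f (fun i => (ts i).eval 𝕄 s)

/-- Variables occurring in a term. -/
def Term.fv {σ : Sig} : Term σ → Finset ℕ
  | .var x => {x}
  | .func _ ts => Finset.univ.biUnion fun i => (ts i).fv

/-- A team: a finite set of variables (the domain) together with a set of assignments.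
Assignments are encoded as total functions `ℕ → α` that take the value `default`
outside the domain of the team (so that an assignment `s : dom(X) → M` is identified
with its extension by `default`). -/
structure Team (α : Type) [Inhabited α] where
  dom : Finset ℕ
  assignments : Set (ℕ → α)
  supported : ∀ s ∈ assignments, ∀ y ∉ dom, s y = default

variable {σ : Sig} {α : Type} [Inhabited α]

/-- The team `∃x X`: domain `dom(X) \ {x}`, consisting of all (supported) `s` such that
`s[a/x] ∈ X` for some `a` (which subsumes the clause "or `s ∈ X`" in the encoding). -/
def Team.eexists (x : ℕ) (X : Team α) : Team α where
  dom := X.dom.erase x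
  assignments := {s | (∀ y ∉ X.dom.erase x, s y = default) ∧
    ∃ a : α, Function.update s x a ∈ X.assignments}
  supported := fun _ hs => hs.1

/-- The team `∀x X`: domain `dom(X) \ {x}`, consisting of all (supported) `s` such that
`s[a/x] ∈ X` for all `a ∈ M` (when `x ∈ dom(X)`), or `s ∈ X` (when `x ∉ dom(X)`). -/
def Team.eforall (x : ℕ) (X : Team α) : Team α where
  dom := X.dom.erase x
  assignments := {s | (∀ y ∉ X.dom.erase x, s y = default) ∧
    if x ∈ X.dom then ∀ a : α, Function.update s x a ∈ X.assignments
    else s ∈ X.assignments}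
  supported := fun _ hs => hs.1

/-- Iterated application `∃x̄ X`. -/
def Team.eexistsN (l : List ℕ) (X : Team α) : Team α := l.foldr Team.eexists X

/-- Iterated application `∀x̄ X`. -/
def Team.eforallN (l : List ℕ) (X : Team α) : Team α := l.foldr Team.eforall X

/-- Restriction of an assignment to a finite set of variables (default outside). -/
def restrictFun (d : Finset ℕ) (s : ℕ → α) : ℕ → α := fun y => if y ∈ d then s y else default

/-- The restriction `X ↾ V` of a team, with domain `dom(X) ∩ V`. -/
def Team.restrict (X : Team α) (V : Finset ℕ) : Team α where
  dom := X.dom ∩ V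
  assignments := {t | ∃ s ∈ X.assignments, t = restrictFun (X.dom ∩ V) s}
  supported := by rintro t ⟨s, _, rfl⟩ y hy; simp only [restrictFun]; exact if_neg hy

/-- The full team on a domain `d`: all (supported) assignments. -/
def Team.full (α : Type) [Inhabited α] (d : Finset ℕ) : Team α where
  dom := d
  assignments := {s | ∀ y ∉ d, s y = default}
  supported := fun _ hs => hs

/-- The complement team `X^c`: all assignments with domain `dom(X)` not in `X`. -/
def Team.compl (X : Team α) : Team α where
  dom := X.dom
  assignments := {s | (∀ y ∉ X.dom, s y = default) ∧ s ∉ X.assignments}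
  supported := fun _ hs => hs.1

/-- Union of two teams. -/
def Team.unionT (X Y : Team α) : Team α where
  dom := X.dom ∪ Y.dom
  assignments := X.assignments ∪ Y.assignments
  supported := by
    rintro s (hs | hs) y hy
    · exact X.supported s hs y (fun h => hy (Finset.mem_union_left _ h))
    · exact Y.supported s hs y (fun h => hy (Finset.mem_union_right _ h))

/-- The team `X[M/x] = {s[a/x] | s ∈ X, a ∈ M}`. -/
def Team.subM (X : Team α) (x : ℕ) : Team α where
  dom := insert x X.dom
  assignments := {t | ∃ s ∈ X.assignments, ∃ a : α, t = Function.update s x a}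
  supported := by
    rintro t ⟨s, hs, a, rfl⟩ y hy
    have hyx : y ≠ x := fun h => hy (h ▸ Finset.mem_insert_self x X.dom)
    rw [Function.update_of_ne hyx]
    exact X.supported s hs y (fun h => hy (Finset.mem_insert_of_mem h))

/-- The team `X[f/x] = {s[f(s)/x] | s ∈ X}` for `f : X → M`. -/
def Team.subf (X : Team α) (x : ℕ) (f : (ℕ → α) → α) : Team α where
  dom := insert x X.dom
  assignments := {t | ∃ s ∈ X.assignments, t = Function.update s x (f s)}
  supported := by
    rintro t ⟨s, hs, rfl⟩ y hy
    have hyx : y ≠ x := fun h => hy (h ▸ Finset.mem_insert_self x X.dom)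
    rw [Function.update_of_ne hyx]
    exact X.supported s hs y (fun h => hy (Finset.mem_insert_of_mem h))

/-- The team `X[F/x] = {s[a/x] | s ∈ X, a ∈ F(s)}` for `F : X → P(M)`. -/
def Team.subF (X : Team α) (x : ℕ) (F : (ℕ → α) → Set α) : Team α where
  dom := insert x X.dom
  assignments := {t | ∃ s ∈ X.assignments, ∃ a ∈ F s, t = Function.update s x a}
  supported := by
    rintro t ⟨s, hs, a, _, rfl⟩ y hy
    have hyx : y ≠ x := fun h => hy (h ▸ Finset.mem_insert_self x X.dom)
    rw [Function.update_of_ne hyx]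
    exact X.supported s hs y (fun h => hy (Finset.mem_insert_of_mem h))

/-- Simultaneous update `s[v̄/x̄]` of an assignment along a list of variables. -/
def updVec (s : ℕ → α) (l : List ℕ) (v : Fin l.length → α) : ℕ → α :=
  fun y => if h : y ∈ l then v ⟨l.idxOf y, List.idxOf_lt_length_iff.mpr h⟩ else s y

theorem updVec_not_mem (s : ℕ → α) (l : List ℕ) (v : Fin l.length → α) {y : ℕ} (h : y ∉ l) :
    updVec s l v y = s y := dif_neg h

/-- The team `X[M/x̄]`. -/
def Team.subMVec (X : Team α) (l : List ℕ) : Team α where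
  dom := X.dom ∪ l.toFinset
  assignments := {t | ∃ s ∈ X.assignments, ∃ v : Fin l.length → α, t = updVec s l v}
  supported := by
    rintro t ⟨s, hs, v, rfl⟩ y hy
    rw [updVec_not_mem s l v (fun h => hy (Finset.mem_union_right _ (List.mem_toFinset.mpr h)))]
    exact X.supported s hs y (fun h => hy (Finset.mem_union_left _ h))

/-- The team `X[F/x̄] = {s[ā/x̄] | s ∈ X, ā ∈ F(s)}` for a set-valued `F`. -/
def Team.subFVec (X : Team α) (l : List ℕ) (F : (ℕ → α) → Set (Fin l.length → α)) :
    Team α where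
  dom := X.dom ∪ l.toFinset
  assignments := {t | ∃ s ∈ X.assignments, ∃ v ∈ F s, t = updVec s l v}
  supported := by
    rintro t ⟨s, hs, v, _, rfl⟩ y hy
    rw [updVec_not_mem s l v (fun h => hy (Finset.mem_union_right _ (List.mem_toFinset.mpr h)))]
    exact X.supported s hs y (fun h => hy (Finset.mem_union_left _ h))

/-- The team `Qx̄ Y = {s : dom(Y)∖{x̄} → M | Y_s(x̄) ∈ Q_M}` for a (local) generalized
quantifier `Q_M` of type `⟨k⟩` where `k` is the length of `x̄`. -/
def Team.qapp (l : List ℕ) (QM : Set (Set (Fin l.length → α))) (Y : Team α) : Team α where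
  dom := Y.dom \ l.toFinset
  assignments := {s | (∀ y ∉ Y.dom \ l.toFinset, s y = default) ∧
    {v : Fin l.length → α | updVec s l v ∈ Y.assignments} ∈ QM}
  supported := fun _ hs => hs.1

/-- `Qx Y` for a (local) generalized quantifier of type `⟨1⟩`. -/
def Team.q1app (x : ℕ) (QM : Set (Set α)) (Y : Team α) : Team α where
  dom := Y.dom.erase x
  assignments := {s | (∀ y ∉ Y.dom.erase x, s y = default) ∧
    {a : α | Function.update s x a ∈ Y.assignments} ∈ QM}
  supported := fun _ hs => hs.1

/-- The team `{ε}` consisting of just the empty assignment. -/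
def epsTeam (α : Type) [Inhabited α] : Team α where
  dom := ∅
  assignments := {fun _ => default}
  supported := by rintro s rfl y _; rfl

/-- `rel(X) ⊆ M^n`: the relation corresponding to a team, with `dom(X)` enumerated in
increasing order. -/
def Team.relSetN (X : Team α) (n : ℕ) (h : X.dom.card = n) : Set (Fin n → α) :=
  {v | ∃ s ∈ X.assignments, ∀ i, v i = s (X.dom.orderEmbOfFin h i)}

end Paper

namespace Paper

/-- Formulas of dependence logic (in negation normal form): literals, dependence atoms
`dep(t₁,…,tₙ,t)`, internal connectives `⩓`/`⩔`, and quantifiers. -/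
inductive DForm (σ : Sig) where
  | rel : (r : σ.Rel) → (Fin (σ.arR r) → Term σ) → DForm σ
  | nrel : (r : σ.Rel) → (Fin (σ.arR r) → Term σ) → DForm σ
  | eq : Term σ → Term σ → DForm σ
  | neq : Term σ → Term σ → DForm σ
  | dep : List (Term σ) → Term σ → DForm σ
  | iand : DForm σ → DForm σ → DForm σ
  | ior : DForm σ → DForm σ → DForm σ
  | ex : ℕ → DForm σ → DForm σ
  | all : ℕ → DForm σ → DForm σ

variable {σ : Sig} {α : Type} [Inhabited α]

/-- Free variables of a dependence logic formula. -/
def DForm.fv : DForm σ → Finset ℕ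
  | .rel _ ts | .nrel _ ts => Finset.univ.biUnion fun i => (ts i).fv
  | .eq t u | .neq t u => t.fv ∪ u.fv
  | .dep ts t => ts.foldr (fun u acc => u.fv ∪ acc) t.fv
  | .iand φ ψ | .ior φ ψ => φ.fv ∪ ψ.fv
  | .ex x φ | .all x φ => φ.fv.erase x

/-- Team satisfaction for dependence logic. -/
def DSat (𝕄 : Struc σ α) : DForm σ → Team α → Prop
  | .rel r ts, X => ∀ s ∈ X.assignments, 𝕄.interpR r fun i => (ts i).eval 𝕄 s
  | .nrel r ts, X => ∀ s ∈ X.assignments, ¬ 𝕄.interpR r fun i => (ts i).eval 𝕄 s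
  | .eq t u, X => ∀ s ∈ X.assignments, t.eval 𝕄 s = u.eval 𝕄 s
  | .neq t u, X => ∀ s ∈ X.assignments, t.eval 𝕄 s ≠ u.eval 𝕄 s
  | .dep ts t, X => ∀ s ∈ X.assignments, ∀ s' ∈ X.assignments,
      (∀ u ∈ ts, u.eval 𝕄 s = u.eval 𝕄 s') → t.eval 𝕄 s = t.eval 𝕄 s'
  | .iand φ ψ, X => ∃ Y Z : Team α, Y.dom = X.dom ∧ Z.dom = X.dom ∧
      X.assignments = Y.assignments ∩ Z.assignments ∧ DSat 𝕄 φ Y ∧ DSat 𝕄 ψ Z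
  | .ior φ ψ, X => ∃ Y Z : Team α, Y.dom = X.dom ∧ Z.dom = X.dom ∧
      X.assignments = Y.assignments ∪ Z.assignments ∧ DSat 𝕄 φ Y ∧ DSat 𝕄 ψ Z
  | .ex x φ, X => ∃ Y : Team α, x ∈ Y.dom ∧ Team.eexists x Y = Team.eexists x X ∧ DSat 𝕄 φ Y
  | .all x φ, X => ∃ Y : Team α, x ∈ Y.dom ∧ Team.eforall x Y = Team.eexists x X ∧ DSat 𝕄 φ Y

end Paper

namespace Paper

lemma Team.ext' {α : Type} [Inhabited α] {X Y : Team α} (h1 : X.dom = Y.dom)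
    (h2 : X.assignments = Y.assignments) : X = Y := by
  cases X; cases Y; simp_all

lemma update_default_eq {α : Type} [Inhabited α] {s : ℕ → α} {x : ℕ} (h : s x = default) :
    Function.update s x default = s := by rw [← h]; exact Function.update_eq_self x s

lemma dsat_mono {σ : Sig} {α : Type} [Inhabited α] (M : Struc σ α) (φ : DForm σ) :
    ∀ (X Y : Team α), Y.dom = X.dom → Y.assignments ⊆ X.assignments →
    DSat M φ X → DSat M φ Y := by
  induction φ with
  | rel r ts => intro X Y _ hsub h s hs; exact h s (hsub hs)
  | nrel r ts => intro X Y _ hsub h s hs; exact h s (hsub hs)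
  | eq t u => intro X Y _ hsub h s hs; exact h s (hsub hs)
  | neq t u => intro X Y _ hsub h s hs; exact h s (hsub hs)
  | dep ts t => intro X Y _ hsub h s hs s' hs' he; exact h s (hsub hs) s' (hsub hs') he
  | iand φ ψ ihφ ihψ =>
    rintro X Y hdom hsub ⟨A, B, hA, hB, hint, hφ, hψ⟩
    refine ⟨⟨A.dom, Y.assignments, fun s hs y hy => Y.supported s hs y (by rwa [hA, ← hdom] at hy)⟩,
           ⟨B.dom, Y.assignments, fun s hs y hy => Y.supported s hs y (by rwa [hB, ← hdom] at hy)⟩,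
           by simp [hA, hdom], by simp [hB, hdom], by simp, ?_, ?_⟩
    · exact ihφ A _ rfl (fun s hs => ((hint ▸ hsub hs : _)).1) hφ
    · exact ihψ B _ rfl (fun s hs => ((hint ▸ hsub hs : _)).2) hψ
  | ior φ ψ ihφ ihψ =>
    rintro X Y hdom hsub ⟨A, B, hA, hB, hun, hφ, hψ⟩
    refine ⟨⟨A.dom, A.assignments ∩ Y.assignments, fun s hs => A.supported s hs.1⟩,
           ⟨B.dom, B.assignments ∩ Y.assignments, fun s hs => B.supported s hs.1⟩,
           by simp [hA, hdom], by simp [hB, hdom], ?_, ?_, ?_⟩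
    · show Y.assignments = (A.assignments ∩ Y.assignments) ∪ (B.assignments ∩ Y.assignments)
      ext s; constructor
      · intro hs
        rcases (hun ▸ hsub hs : s ∈ A.assignments ∪ B.assignments) with h | h
        · exact Or.inl ⟨h, hs⟩
        · exact Or.inr ⟨h, hs⟩
      · rintro (⟨_, hs⟩ | ⟨_, hs⟩) <;> exact hs
    · exact ihφ A _ rfl (fun s hs => hs.1) hφ
    · exact ihψ B _ rfl (fun s hs => hs.1) hψ
  | ex x φ ih =>
    rintro X Y hdom hsub ⟨W, hxW, hW, hφ⟩
    have hWd : W.dom.erase x = X.dom.erase x := congrArg Team.dom hW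
    have hWa : (Team.eexists x W).assignments = (Team.eexists x X).assignments :=
      congrArg Team.assignments hW
    refine ⟨⟨W.dom, {t | t ∈ W.assignments ∧
        Function.update t x default ∈ (Team.eexists x Y).assignments},
        fun t ht => W.supported t ht.1⟩, hxW, ?_, ih W _ rfl (fun t ht => ht.1) hφ⟩
    apply Team.ext'
    · show W.dom.erase x = Y.dom.erase x
      rw [hWd, hdom]
    · ext s
      show ((∀ y ∉ W.dom.erase x, s y = default) ∧ ∃ a, Function.update s x a ∈ _) ↔
        ((∀ y ∉ Y.dom.erase x, s y = default) ∧ ∃ a, Function.update s x a ∈ Y.assignments)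
      rw [hWd, hdom]
      constructor
      · rintro ⟨hsupp, a, htW, htY⟩
        have hsx : s x = default := hsupp x (Finset.notMem_erase x _)
        rw [Function.update_idem, update_default_eq hsx] at htY
        exact ⟨hsupp, htY.2⟩
      · rintro ⟨hsupp, a, ha⟩
        refine ⟨hsupp, ?_⟩
        have hsuppY : ∀ y ∉ Y.dom.erase x, s y = default :=
          fun y hy => hsupp y (by rwa [hdom] at hy)
        have hsx : s x = default := hsupp x (Finset.notMem_erase x _)
        have hsX : s ∈ (Team.eexists x X).assignments := ⟨hsupp, a, hsub ha⟩
        rw [← hWa] at hsX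
        obtain ⟨hsupp', b, hb⟩ := hsX
        exact ⟨b, hb, by rw [Function.update_idem, update_default_eq hsx]; exact ⟨hsuppY, a, ha⟩⟩
  | all x φ ih =>
    rintro X Y hdom hsub ⟨W, hxW, hW, hφ⟩
    have hWd : W.dom.erase x = X.dom.erase x := congrArg Team.dom hW
    have hWa : (Team.eforall x W).assignments = (Team.eexists x X).assignments :=
      congrArg Team.assignments hW
    refine ⟨⟨W.dom, {t | t ∈ W.assignments ∧
        Function.update t x default ∈ (Team.eexists x Y).assignments},
        fun t ht => W.supported t ht.1⟩, hxW, ?_, ih W _ rfl (fun t ht => ht.1) hφ⟩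
    apply Team.ext'
    · show W.dom.erase x = Y.dom.erase x
      rw [hWd, hdom]
    · ext s
      show ((∀ y ∉ W.dom.erase x, s y = default) ∧
          (if x ∈ W.dom then ∀ a, Function.update s x a ∈ _ else s ∈ _)) ↔
        ((∀ y ∉ Y.dom.erase x, s y = default) ∧ ∃ a, Function.update s x a ∈ Y.assignments)
      rw [hWd, hdom, if_pos hxW]
      constructor
      · rintro ⟨hsupp, hall⟩
        have hsx : s x = default := hsupp x (Finset.notMem_erase x _)
        have h2 := (hall default).2
        rw [Function.update_idem, update_default_eq hsx] at h2
        exact ⟨hsupp, h2.2⟩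
      · rintro ⟨hsupp, a, ha⟩
        refine ⟨hsupp, ?_⟩
        have hsx : s x = default := hsupp x (Finset.notMem_erase x _)
        have hsuppY : ∀ y ∉ Y.dom.erase x, s y = default :=
          fun y hy => hsupp y (by rwa [hdom] at hy)
        have hsY : s ∈ (Team.eexists x Y).assignments := ⟨hsuppY, a, ha⟩
        have hsX : s ∈ (Team.eexists x X).assignments := ⟨hsupp, a, hsub ha⟩
        rw [← hWa] at hsX
        have h2 : (if x ∈ W.dom then ∀ a, Function.update s x a ∈ W.assignments
            else s ∈ W.assignments) := hsX.2
        rw [if_pos hxW] at h2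
        intro b
        exact ⟨h2 b, by rw [Function.update_idem, update_default_eq hsx]; exact hsY⟩

/-- `M,X ⊨_D ∀x φ` iff `M,X[M/x] ⊨_D φ`, for every dependence logic
formula `φ` with `FV(∀x φ) ⊆ dom(X)`. -/
theorem dsat_all_iff {σ : Sig} {α : Type} [Inhabited α] (𝕄 : Struc σ α)
    (φ : DForm σ) (x : ℕ) (X : Team α) (hfv : (DForm.all x φ).fv ⊆ X.dom) :
    DSat 𝕄 (DForm.all x φ) X ↔ DSat 𝕄 φ (X.subM x) := by
  constructor
  · rintro ⟨Y, hxY, hY, hφ⟩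
    have hYd : Y.dom.erase x = X.dom.erase x := congrArg Team.dom hY
    have hYa : (Team.eforall x Y).assignments = (Team.eexists x X).assignments :=
      congrArg Team.assignments hY
    apply dsat_mono 𝕄 φ Y (X.subM x) ?_ ?_ hφ
    · show insert x X.dom = Y.dom
      rw [← Finset.insert_erase hxY, hYd]
      ext y; simp [Finset.mem_erase]; try tauto
    · rintro t ⟨s, hs, a, rfl⟩
      set r := Function.update s x default with hr
      have hrmem : r ∈ (Team.eexists x X).assignments := by
        refine ⟨?_, s x, ?_⟩
        · intro y hy
          rcases eq_or_ne y x with rfl | hne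
          · simp [hr]
          · rw [hr, Function.update_of_ne hne]
            exact X.supported s hs y (fun h => hy (Finset.mem_erase.mpr ⟨hne, h⟩))
        · rw [hr, Function.update_idem, Function.update_eq_self]; exact hs
      rw [← hYa] at hrmem
      have h2 : (if x ∈ Y.dom then ∀ b, Function.update r x b ∈ Y.assignments
          else r ∈ Y.assignments) := hrmem.2
      rw [if_pos hxY] at h2
      have := h2 a
      rwa [hr, Function.update_idem] at this
  · intro hφ
    refine ⟨X.subM x, Finset.mem_insert_self x X.dom, ?_, hφ⟩
    have hxd : x ∈ (X.subM x).dom := Finset.mem_insert_self x X.dom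
    have hed : (insert x X.dom).erase x = X.dom.erase x := by
      ext y; simp [Finset.mem_erase]; try tauto
    apply Team.ext'
    · exact hed
    · ext s
      show ((∀ y ∉ (insert x X.dom).erase x, s y = default) ∧
          (if x ∈ (X.subM x).dom then ∀ a, Function.update s x a ∈ (X.subM x).assignments
           else s ∈ (X.subM x).assignments)) ↔
        ((∀ y ∉ X.dom.erase x, s y = default) ∧ ∃ a, Function.update s x a ∈ X.assignments)
      rw [hed, if_pos hxd]
      constructor
      · rintro ⟨hsupp, hall⟩
        obtain ⟨s0, hs0, a0, heq⟩ := hall default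
        refine ⟨hsupp, s0 x, ?_⟩
        have : Function.update s x (s0 x) = s0 := by
          funext y
          rcases eq_or_ne y x with rfl | hne
          · simp
          · rw [Function.update_of_ne hne]
            have := congrFun heq y
            rwa [Function.update_of_ne hne, Function.update_of_ne hne] at this
        rw [this]; exact hs0
      · rintro ⟨hsupp, a, ha⟩
        refine ⟨hsupp, fun b => ⟨Function.update s x a, ha, b, ?_⟩⟩
        rw [Function.update_idem]

end Paper
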